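/- For every n ≥ 2, the spectral radius of B_n^s satisfies ρ(B_n^s) > 2; in particular B_n^s has a real eigenvalue strictly greater than 2, equivalently det(2 I_n − B_n^s) < 0. -/

import Mathlib

open Matrix Real

noncomputable def bS (n : ℕ) : Matrix (Fin n) (Fin n) ℝ := fun i j =>
  if i = j then (if (i : ℕ) = n - 1 then 2 else 1)
  else if (i : ℕ) + 1 = (j : ℕ) ∨ (j : ℕ) + 1 = (i : ℕ) then
    (if (i : ℕ) = n - 1 ∨ (j : ℕ) = n - 1 then -1 else -1/2)
  else 0

def eigenAbsSet {n : ℕ} (A : Matrix (Fin n) (Fin n) ℝ) : Set ℝ :=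
  {r : ℝ | ∃ μ : ℝ, (μ • (1 : Matrix (Fin n) (Fin n) ℝ) - A).det = 0 ∧ r = |μ|}

noncomputable def specRad {n : ℕ} (A : Matrix (Fin n) (Fin n) ℝ) : ℝ :=
  sSup (eigenAbsSet A)

noncomputable def MM (n : ℕ) : Matrix (Fin n) (Fin n) ℝ :=
  (2 : ℝ) • (1 : Matrix (Fin n) (Fin n) ℝ) - bS n

lemma MM_apply {n : ℕ} (i j : Fin n) : MM n i j =
    if i = j then (if (i : ℕ) = n - 1 then 0 else 1)
    else if (i : ℕ) + 1 = (j : ℕ) ∨ (j : ℕ) + 1 = (i : ℕ) then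
      (if (i : ℕ) = n - 1 ∨ (j : ℕ) = n - 1 then 1 else 1/2)
    else 0 := by
  simp only [MM, bS, Matrix.sub_apply, Matrix.smul_apply, Matrix.one_apply, smul_ite, smul_eq_mul]
  split_ifs <;> norm_num

lemma MM_nat {n : ℕ} (i j : Fin n) (a b : ℕ) (hi : (i:ℕ) = a) (hj : (j:ℕ) = b) : MM n i j =
    if a = b then (if a = n - 1 then 0 else 1)
    else if a + 1 = b ∨ b + 1 = a then
      (if a = n - 1 ∨ b = n - 1 then 1 else 1/2)
    else 0 := by
  subst hi hj
  rw [MM_apply]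
  simp [Fin.ext_iff]

lemma sub1 (n : ℕ) : (MM (n+1)).submatrix Fin.succ Fin.succ = MM n := by
  ext i j
  have hi := i.2
  have hj := j.2
  simp only [Matrix.submatrix_apply, MM_apply, Fin.val_succ, Fin.ext_iff]
  split_ifs
  all_goals first | rfl | (exfalso; omega)

lemma det_aux (n : ℕ) :
    Matrix.det ((MM (n+4)).submatrix Fin.succ (Fin.succAbove 1)) = (1/2) * Matrix.det (MM (n+2)) := by
  set B := (MM (n+4)).submatrix Fin.succ (Fin.succAbove 1) with hB
  rw [Matrix.det_succ_column_zero, Fin.sum_univ_succ]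
  have h10 : ((1 : Fin (n+4)).succAbove 0 : ℕ) = 0 := by
    simp [Fin.succAbove, Fin.lt_def]
  have hB00 : B 0 0 = 1/2 := by
    rw [hB, Matrix.submatrix_apply, MM_nat _ _ 1 0 (by simp) h10]
    norm_num
  have hrest : ∀ i : Fin (n+2), B i.succ 0 = 0 := by
    intro i
    rw [hB, Matrix.submatrix_apply, MM_nat _ _ ((i:ℕ)+2) 0 (by simp) h10]
    have := i.2
    split_ifs <;> first | rfl | simp_all | (exfalso; omega)
  have hsub : B.submatrix (Fin.succAbove 0) Fin.succ = MM (n+2) := by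
    ext i j
    have hi := i.2
    have hj := j.2
    have hsa : ((1 : Fin (n+4)).succAbove j.succ : ℕ) = (j:ℕ) + 2 := by
      rw [Fin.succAbove_of_le_castSucc]
      · simp
      · simp [Fin.le_def]
    rw [Matrix.submatrix_apply, Fin.succAbove_zero, hB, Matrix.submatrix_apply,
      MM_nat _ _ ((i:ℕ)+2) ((j:ℕ)+2) (by simp) hsa, MM_apply]
    simp only [Fin.ext_iff]
    split_ifs
    all_goals first | rfl | (exfalso; omega)
  rw [Fintype.sum_eq_zero _ (fun i => by rw [hrest i]; ring)]
  rw [hB00, hsub]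
  norm_num

lemma MM_rec (n : ℕ) : Matrix.det (MM (n+4)) =
    Matrix.det (MM (n+3)) - (1/4) * Matrix.det (MM (n+2)) := by
  rw [show (n+4) = (n+3)+1 from rfl, Matrix.det_succ_row_zero, Fin.sum_univ_succ,
    Fin.sum_univ_succ]
  have hz : ∀ j : Fin (n+2), MM (n+4) 0 j.succ.succ = 0 := by
    intro j
    rw [MM_nat _ _ 0 ((j:ℕ)+2) (by simp) (by simp)]
    split_ifs <;> first | rfl | simp_all | (exfalso; omega)
  have h00 : MM (n+4) 0 0 = 1 := by
    rw [MM_nat _ _ 0 0 rfl rfl]; norm_num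
  have h01 : MM (n+4) 0 1 = 1/2 := by
    rw [MM_nat _ _ 0 1 rfl (by simp)]
    split_ifs <;> first | rfl | (exfalso; omega) | simp_all
  rw [Fintype.sum_eq_zero _ (fun j => by rw [hz j]; ring)]
  simp only [Fin.succ_zero_eq_one]
  rw [Fin.succAbove_zero, sub1, h00, h01, det_aux]
  norm_num
  ring

lemma detMM2 : Matrix.det (MM 2) = -1 := by
  rw [Matrix.det_fin_two]
  rw [MM_nat (0 : Fin 2) 0 0 0 rfl rfl, MM_nat (0 : Fin 2) 1 0 1 rfl rfl,
    MM_nat (1 : Fin 2) 0 1 0 rfl rfl, MM_nat (1 : Fin 2) 1 1 1 rfl rfl]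
  norm_num

lemma detMM3 : Matrix.det (MM 3) = -1 := by
  rw [Matrix.det_fin_three]
  rw [MM_nat (0 : Fin 3) 0 0 0 rfl rfl, MM_nat (0 : Fin 3) 1 0 1 rfl rfl,
    MM_nat (0 : Fin 3) 2 0 2 rfl rfl, MM_nat (1 : Fin 3) 0 1 0 rfl rfl,
    MM_nat (1 : Fin 3) 1 1 1 rfl rfl, MM_nat (1 : Fin 3) 2 1 2 rfl rfl,
    MM_nat (2 : Fin 3) 0 2 0 rfl rfl, MM_nat (2 : Fin 3) 1 2 1 rfl rfl,
    MM_nat (2 : Fin 3) 2 2 2 rfl rfl]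
  norm_num

lemma detMM (n : ℕ) : Matrix.det (MM (n+2)) = -((n:ℝ)+1)/2^n := by
  induction n using Nat.strong_induction_on with
  | _ n ih =>
    match n with
    | 0 => simpa using detMM2
    | 1 => rw [detMM3]; norm_num
    | (m+2) =>
      rw [show m+2+2 = m+4 from rfl, MM_rec, ih (m+1) (by omega), ih m (by omega)]
      push_cast
      field_simp
      ring

lemma eval_cp (n : ℕ) (x : ℝ) : ((bS n).charpoly.eval x) =
    (x • (1 : Matrix (Fin n) (Fin n) ℝ) - bS n).det := by
  rw [Matrix.charpoly, ← Polynomial.coe_evalRingHom, RingHom.map_det]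
  congr 1
  ext i j
  by_cases h : i = j
  · subst h
    simp [Matrix.charmatrix_apply_eq, Matrix.one_apply]
  · simp [Matrix.charmatrix_apply_ne _ _ _ h, Matrix.one_apply, h]

theorem stmt14' (n : ℕ) (hn : 2 ≤ n) :
    (∃ μ : ℝ, (μ • (1 : Matrix (Fin n) (Fin n) ℝ) - bS n).det = 0 ∧ 2 < μ) ∧
    ((2 : ℝ) • (1 : Matrix (Fin n) (Fin n) ℝ) - bS n).det < 0 := by
  obtain ⟨m, rfl⟩ : ∃ m, n = m + 2 := ⟨n - 2, by omega⟩
  have hdet : ((2 : ℝ) • (1 : Matrix (Fin (m+2)) (Fin (m+2)) ℝ) - bS (m+2)).det < 0 := by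
    have := detMM m
    rw [MM] at this
    rw [this]
    have h1 : (0:ℝ) < (m:ℝ)+1 := by positivity
    have h2 : (0:ℝ) < 2^m := by positivity
    rw [neg_div]
    exact neg_neg_of_pos (div_pos h1 h2)
  refine ⟨?_, hdet⟩
  set p := (bS (m+2)).charpoly with hp
  have hmono : p.Monic := Matrix.charpoly_monic _
  have hdeg : 0 < p.degree := by
    rw [hp, Matrix.charpoly_degree_eq_dim]
    simp
    exact_mod_cast (by omega : (0:ℕ) < m + 2)
  have htt : Filter.Tendsto (fun x => p.eval x) Filter.atTop Filter.atTop :=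
    Polynomial.tendsto_atTop_of_leadingCoeff_nonneg p hdeg (by simp [hmono.leadingCoeff])
  obtain ⟨b, hb1, hb2⟩ := ((htt.eventually_ge_atTop 1).and (Filter.eventually_ge_atTop (2:ℝ))).exists
  have heval2 : p.eval 2 < 0 := by rw [hp, eval_cp]; exact hdet
  have hivt := intermediate_value_Ioo hb2 (p.continuous.continuousOn (s := Set.Icc 2 b))
  have h0mem : (0:ℝ) ∈ Set.Ioo (p.eval 2) (p.eval b) := ⟨heval2, by linarith⟩
  obtain ⟨μ, hμIoo, hμ0⟩ := hivt h0mem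
  refine ⟨μ, ?_, hμIoo.1⟩
  rw [← eval_cp]
  exact hμ0
/-- for every n ≥ 2, ρ(Bₙˢ) > 2; in particular Bₙˢ has a real
eigenvalue strictly greater than 2, equivalently det(2 Iₙ − Bₙˢ) < 0. -/
theorem stmt14 (n : ℕ) (hn : 2 ≤ n) :
    2 < specRad (bS n) ∧
    (∃ μ : ℝ, (μ • (1 : Matrix (Fin n) (Fin n) ℝ) - bS n).det = 0 ∧ 2 < μ) ∧
    ((2 : ℝ) • (1 : Matrix (Fin n) (Fin n) ℝ) - bS n).det < 0 := by
  obtain ⟨⟨μ, hμdet, hμ2⟩, hdet⟩ := stmt14' n hn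
  refine ⟨?_, ⟨μ, hμdet, hμ2⟩, hdet⟩
  have hp0 : (bS n).charpoly ≠ 0 := (Matrix.charpoly_monic _).ne_zero
  have hsub : eigenAbsSet (bS n) ⊆ (fun x => |x|) '' {x | (bS n).charpoly.IsRoot x} := by
    rintro r ⟨ν, hν, rfl⟩
    exact ⟨ν, by rwa [Set.mem_setOf_eq, Polynomial.IsRoot, eval_cp], rfl⟩
  have hfin := (Polynomial.finite_setOf_isRoot hp0).image (fun x => |x|)
  have hbdd : BddAbove (eigenAbsSet (bS n)) := BddAbove.mono hsub hfin.bddAbove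
  have hmem : |μ| ∈ eigenAbsSet (bS n) := ⟨μ, hμdet, rfl⟩
  calc (2:ℝ) < μ := hμ2
    _ ≤ |μ| := le_abs_self μ
    _ ≤ specRad (bS n) := le_csSup hbdd hmem
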